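/- Let ψ : ℝ → EuclideanSpace ℝ (Fin n) be continuous, ρ > 0, t_c > 0, δ > 0, and suppose the matrix (∫₀^{t_c} vecMulVec (ψ(s)) (ψ(s)) ds) − δ • 1 is positive semidefinite. If Φ : ℝ → Matrix (Fin n) (Fin n) ℝ is differentiable with Φ'(t) = −ρ • Φ(t) + vecMulVec (ψ(t)) (ψ(t)) for all t ≥ 0 and Φ(0) = 0, then det (Φ(t_c)) ≥ (δ * Real.exp(−ρ t_c))^n > 0. In particular, the scalar signal Δ := det ∘ Φ is interval exciting: there exists t with Δ(t) > 0. -/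

import Mathlib

open Matrix
open scoped RealInnerProductSpace

attribute [local instance] Matrix.normedAddCommGroup Matrix.normedSpace

noncomputable instance matrixENormedAddMonoid {n : ℕ} : ENormedAddMonoid (Matrix (Fin n) (Fin n) ℝ) :=
  (inferInstance : @ENormedAddMonoid _ (Matrix.normedAddCommGroup).toUniformSpace.toTopologicalSpace)

section Aux

variable {n : ℕ}

/-- The quadratic form `A ↦ xᵀ A x` as a continuous linear map. -/
noncomputable def qfCLM (x : Fin n → ℝ) : Matrix (Fin n) (Fin n) ℝ →L[ℝ] ℝ :=
  LinearMap.toContinuousLinearMap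
    { toFun := fun A => dotProduct x (A *ᵥ x)
      map_add' := by intro A B; simp [Matrix.add_mulVec, dotProduct_add]
      map_smul' := by intro c A; simp [Matrix.smul_mulVec, dotProduct_smul] }

@[simp] lemma qfCLM_apply (x : Fin n → ℝ) (A : Matrix (Fin n) (Fin n) ℝ) :
    qfCLM x A = dotProduct x (A *ᵥ x) := rfl

/-- The matrix entry `A ↦ A i j` as a continuous linear map. -/
noncomputable def entryCLM (i j : Fin n) : Matrix (Fin n) (Fin n) ℝ →L[ℝ] ℝ :=
  LinearMap.toContinuousLinearMap
    { toFun := fun A => A i j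
      map_add' := by intro A B; rfl
      map_smul' := by intro c A; rfl }

@[simp] lemma entryCLM_apply (i j : Fin n) (A : Matrix (Fin n) (Fin n) ℝ) :
    entryCLM i j A = A i j := rfl

lemma psd_smul {A : Matrix (Fin n) (Fin n) ℝ} (hA : A.PosSemidef) {c : ℝ} (hc : 0 ≤ c) :
    (c • A).PosSemidef := by
  refine Matrix.posSemidef_iff_dotProduct_mulVec.mpr ⟨?_, fun x => ?_⟩
  · unfold Matrix.IsHermitian
    rw [Matrix.conjTranspose_smul, hA.1]
    simp
  · have := (Matrix.posSemidef_iff_dotProduct_mulVec.mp hA).2 x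
    rw [Matrix.smul_mulVec, dotProduct_smul]
    exact mul_nonneg hc this

lemma psd_vecMulVec (x : Fin n → ℝ) : (vecMulVec x x).PosSemidef := by
  have h : vecMulVec x x = (Matrix.replicateRow Unit x)ᴴ * Matrix.replicateRow Unit x := by
    ext i j
    simp [Matrix.mul_apply, Matrix.conjTranspose_apply, Matrix.vecMulVec_apply]
  rw [h]
  exact Matrix.posSemidef_conjTranspose_mul_self _

lemma psd_intervalIntegral {f : ℝ → Matrix (Fin n) (Fin n) ℝ} {a b : ℝ}
    (hab : a ≤ b) (hf : IntervalIntegrable f MeasureTheory.volume a b)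
    (hpsd : ∀ s ∈ Set.Icc a b, (f s).PosSemidef) :
    (∫ s in a..b, f s).PosSemidef := by
  have huIcc : Set.uIcc a b = Set.Icc a b := Set.uIcc_of_le hab
  refine Matrix.posSemidef_iff_dotProduct_mulVec.mpr ⟨?_, fun x => ?_⟩
  · unfold Matrix.IsHermitian
    ext i j
    rw [Matrix.conjTranspose_apply]
    have h1 : (∫ s in a..b, f s) j i = ∫ s in a..b, f s j i := by
      exact ((entryCLM j i).intervalIntegral_comp_comm hf).symm
    have h2 : (∫ s in a..b, f s) i j = ∫ s in a..b, f s i j := by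
      exact ((entryCLM i j).intervalIntegral_comp_comm hf).symm
    rw [star_trivial, h1, h2]
    refine intervalIntegral.integral_congr fun s hs => ?_
    rw [huIcc] at hs
    have := (hpsd s hs).1
    conv_lhs => rw [← this]
    simp [Matrix.conjTranspose_apply]
  · have h : dotProduct (star x) ((∫ s in a..b, f s) *ᵥ x)
        = ∫ s in a..b, dotProduct (star x) (f s *ᵥ x) := by
      rw [star_trivial]; exact ((qfCLM x).intervalIntegral_comp_comm hf).symm
    rw [h]
    refine intervalIntegral.integral_nonneg hab fun s hs => ?_
    exact (Matrix.posSemidef_iff_dotProduct_mulVec.mp (hpsd s hs)).2 x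

end Aux

lemma det_ge_pow_of_psd_sub {n : ℕ} {A : Matrix (Fin n) (Fin n) ℝ} {c : ℝ} (hc : 0 ≤ c)
    (h : (A - c • (1 : Matrix (Fin n) (Fin n) ℝ)).PosSemidef) : c ^ n ≤ A.det := by
  have h1 : ((c : ℝ) • (1 : Matrix (Fin n) (Fin n) ℝ)).IsHermitian := by
    unfold Matrix.IsHermitian
    rw [Matrix.conjTranspose_smul, Matrix.conjTranspose_one]
    simp
  have hA : A.IsHermitian := by
    have := h.1.add h1
    simpa using this
  have hev : ∀ i, c ≤ hA.eigenvalues i := by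
    intro i
    set v : EuclideanSpace ℝ (Fin n) := hA.eigenvectorBasis i with hv
    have hmv : A *ᵥ ⇑v = hA.eigenvalues i • ⇑v := hA.mulVec_eigenvectorBasis i
    have hnorm : dotProduct (⇑v) (⇑v) = 1 := by
      have h2 : ⟪v, v⟫ = (1:ℝ) := by
        have := hA.eigenvectorBasis.orthonormal.1 i
        rw [@real_inner_self_eq_norm_sq, this]; norm_num
      rw [EuclideanSpace.inner_eq_star_dotProduct] at h2
      simpa [star_trivial] using h2
    have hq := (Matrix.posSemidef_iff_dotProduct_mulVec.mp h).2 ⇑v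
    rw [Matrix.sub_mulVec, Matrix.smul_mulVec, Matrix.one_mulVec, hmv,
      star_trivial, dotProduct_sub, dotProduct_smul, dotProduct_smul,
      smul_eq_mul, smul_eq_mul, hnorm] at hq
    linarith
  have hdet : A.det = ∏ i, hA.eigenvalues i := by
    simpa using hA.det_eq_prod_eigenvalues
  rw [hdet]
  calc c ^ n = ∏ _i : Fin n, c := by simp
    _ ≤ ∏ i, hA.eigenvalues i :=
        Finset.prod_le_prod (fun i _ => hc) (fun i _ => hev i)

/-- The underlying plain vector of a point of `EuclideanSpace ℝ (Fin n)`. -/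
def ev {n : ℕ} (x : EuclideanSpace ℝ (Fin n)) : Fin n → ℝ :=
  (WithLp.equiv 2 (Fin n → ℝ)) x

/-- Interval excitation of the vector regressor `ψ` implies interval
excitation of the decoupled scalar regressor `Δ = det Φ`:
`det Φ(t_c) ≥ (δ e^{−ρ t_c})ⁿ > 0`. -/
theorem stmt18 {n : ℕ} (ψ : ℝ → EuclideanSpace ℝ (Fin n)) (hψ : Continuous ψ)
    (ρ tc δ : ℝ) (hρ : 0 < ρ) (htc : 0 < tc) (hδ : 0 < δ)
    (hIE : ((∫ s in (0:ℝ)..tc, vecMulVec (ev (ψ s)) (ev (ψ s))) -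
      δ • (1 : Matrix (Fin n) (Fin n) ℝ)).PosSemidef)
    (Φ : ℝ → Matrix (Fin n) (Fin n) ℝ) (hΦ : Differentiable ℝ Φ)
    (hΦd : ∀ t ≥ (0:ℝ), deriv Φ t = (-ρ) • Φ t + vecMulVec (ev (ψ t)) (ev (ψ t)))
    (hΦ0 : Φ 0 = 0) :
    (δ * Real.exp (-ρ * tc)) ^ n ≤ (Φ tc).det ∧
    (0:ℝ) < (δ * Real.exp (-ρ * tc)) ^ n ∧
    ∃ t : ℝ, 0 < (Φ t).det := by
  set M : ℝ → Matrix (Fin n) (Fin n) ℝ := fun s => vecMulVec (ev (ψ s)) (ev (ψ s)) with hM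
  -- continuity
  have hev : Continuous fun s => ev (ψ s) := (PiLp.continuous_ofLp 2 fun _ : Fin n => ℝ).comp hψ
  have hMc : Continuous M := by
    refine continuous_matrix fun i j => ?_
    exact ((continuous_apply i).comp hev).mul ((continuous_apply j).comp hev)
  have hMpsd : ∀ s, (M s).PosSemidef := fun s => psd_vecMulVec _
  have hgc : Continuous fun s => Real.exp (ρ * s) • M s :=
    ((Real.continuous_exp.comp (continuous_const.mul continuous_id)).smul hMc)
  have hint1 : IntervalIntegrable (fun s => Real.exp (ρ * s) • M s) MeasureTheory.volume 0 tc :=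
    hgc.intervalIntegrable 0 tc
  have hint2 : IntervalIntegrable M MeasureTheory.volume 0 tc := hMc.intervalIntegrable 0 tc
  -- FTC
  have hderiv : ∀ t ∈ Set.uIcc (0:ℝ) tc,
      HasDerivAt (fun t => Real.exp (ρ * t) • Φ t) (Real.exp (ρ * t) • M t) t := by
    intro t ht
    rw [Set.uIcc_of_le htc.le] at ht
    have hexp : HasDerivAt (fun t => Real.exp (ρ * t)) (Real.exp (ρ * t) * ρ) t := by
      simpa [mul_comm] using ((hasDerivAt_id t).const_mul ρ).exp
    have hΦt : HasDerivAt Φ ((-ρ) • Φ t + M t) t := by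
      have := (hΦ t).hasDerivAt
      rw [← hΦd t ht.1]; exact this
    have := hexp.smul hΦt
    refine HasDerivAt.congr_deriv this ?_
    rw [smul_add, smul_smul]
    rw [show Real.exp (ρ * t) * (-ρ) = -(Real.exp (ρ * t) * ρ) by ring]
    rw [neg_smul]
    abel
  have hFTC := intervalIntegral.integral_eq_sub_of_hasDerivAt hderiv hint1
  rw [hΦ0, smul_zero, sub_zero] at hFTC
  have hΦtc : Φ tc = Real.exp (-(ρ * tc)) • ∫ s in (0:ℝ)..tc, Real.exp (ρ * s) • M s := by
    rw [hFTC, smul_smul, Real.exp_neg, inv_mul_cancel₀ (Real.exp_ne_zero _), one_smul]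
  -- PSD chain
  set E := ∫ s in (0:ℝ)..tc, Real.exp (ρ * s) • M s with hE
  have hdiff : (E - ∫ s in (0:ℝ)..tc, M s).PosSemidef := by
    rw [hE, ← intervalIntegral.integral_sub hint1 hint2]
    refine psd_intervalIntegral htc.le (hint1.sub hint2) fun s hs => ?_
    have h1 : Real.exp (ρ * s) • M s - M s = (Real.exp (ρ * s) - 1) • M s := by
      rw [sub_smul, one_smul]
    rw [h1]
    refine psd_smul (hMpsd s) ?_
    have : (1:ℝ) ≤ Real.exp (ρ * s) :=
      Real.one_le_exp (mul_nonneg hρ.le hs.1)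
    linarith
  have hsum : (E - δ • (1 : Matrix (Fin n) (Fin n) ℝ)).PosSemidef := by
    have := hdiff.add hIE
    simpa using this
  have hkey : (Φ tc - (δ * Real.exp (-ρ * tc)) • (1 : Matrix (Fin n) (Fin n) ℝ)).PosSemidef := by
    have heq : Φ tc - (δ * Real.exp (-ρ * tc)) • (1 : Matrix (Fin n) (Fin n) ℝ)
        = Real.exp (-(ρ * tc)) • (E - δ • (1 : Matrix (Fin n) (Fin n) ℝ)) := by
      rw [hΦtc, smul_sub, smul_smul]
      congr 1
      rw [show Real.exp (-(ρ * tc)) * δ = δ * Real.exp (-ρ * tc) by rw [neg_mul]; ring]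
    rw [heq]
    exact psd_smul hsum (Real.exp_nonneg _)
  have hc : (0:ℝ) < δ * Real.exp (-ρ * tc) := mul_pos hδ (Real.exp_pos _)
  have hdet := det_ge_pow_of_psd_sub hc.le hkey
  have hpow : (0:ℝ) < (δ * Real.exp (-ρ * tc)) ^ n := pow_pos hc n
  exact ⟨hdet, hpow, tc, lt_of_lt_of_le hpow hdet⟩
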